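/- Let B, C ∈ [0,1] be real numbers with 1/2 ≤ B ≤ 1/2 + 1/(2√2). Suppose that for every α ∈ [0,1] the inequality α·B + (1−α)·C ≤ 1/2 + (1−α)/(4√2) + √((1−α)² + 4α²)/(4√2) holds. Then C ≤ 1/2 + 1/(4√2) + √(16·B·(1−B) − 2)/8. (This is the information gain–disturbance trade-off relation between Bob's and Charlie's random access code success probabilities derived from the bound of Proposition 2.) -/

import Mathlib

private lemma div4r (r x : ℝ) (hr2 : r ^ 2 = 2) (hr : 0 < r) : x / (4 * r) = x * r / 8 := by
  rw [div_eq_div_iff (by positivity) (by norm_num)]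
  linear_combination (-4) * x * hr2


set_option maxHeartbeats 1000000 in
/-- The information gain–disturbance trade-off relation: if Bob's and Charlie's success
probabilities `B, C ∈ [0,1]` with `1/2 ≤ B ≤ 1/2 + 1/(2√2)` satisfy, for every
`α ∈ [0,1]`, the bound `αB + (1−α)C ≤ P̄_succ^POVM(α)`, then
`C ≤ 1/2 + 1/(4√2) + √(16B(1−B) − 2)/8`. -/
theorem tradeoff_relation
    (B C : ℝ) (hB01 : B ∈ Set.Icc (0 : ℝ) 1) (hC01 : C ∈ Set.Icc (0 : ℝ) 1)
    (hBlo : 1 / 2 ≤ B) (hBhi : B ≤ 1 / 2 + 1 / (2 * Real.sqrt 2))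
    (h : ∀ α ∈ Set.Icc (0 : ℝ) 1,
      α * B + (1 - α) * C
        ≤ 1 / 2 + (1 - α) / (4 * Real.sqrt 2)
          + Real.sqrt ((1 - α) ^ 2 + 4 * α ^ 2) / (4 * Real.sqrt 2)) :
    C ≤ 1 / 2 + 1 / (4 * Real.sqrt 2) + Real.sqrt (16 * B * (1 - B) - 2) / 8 := by
  obtain ⟨hB0, hB1⟩ := hB01
  set r := Real.sqrt 2 with hrdef
  have hr2 : r ^ 2 = 2 := Real.sq_sqrt (by norm_num)
  have hrpos : 0 < r := Real.sqrt_pos.mpr (by norm_num)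
  clear_value r
  set b := B - 1/2 with hbdef
  have hb0 : 0 ≤ b := by simp [hbdef]; linarith
  have hb1 : b * (2 * r) ≤ 1 := by
    have h1 : b ≤ 1 / (2 * r) := by simp only [hbdef]; linarith
    exact (le_div_iff₀ (by positivity)).mp h1
  have hbhi : 16 * b ^ 2 ≤ 2 := by nlinarith [hr2, hb0, hb1, hrpos]
  have hargeq : 16 * B * (1 - B) - 2 = 2 - 16 * b ^ 2 := by rw [hbdef]; ring
  rw [hargeq]
  clear_value b
  set s := Real.sqrt (2 - 16 * b ^ 2) with hsdef
  have hs0 : 0 ≤ s := Real.sqrt_nonneg _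
  have hs2 : s ^ 2 = 2 - 16 * b ^ 2 := Real.sq_sqrt (by linarith)
  clear_value s
  rw [div4r r 1 hr2 hrpos]
  rcases eq_or_lt_of_le hs0 with hs | hs
  · -- s = 0 case: b^2 = 1/8
    have hb2 : b ^ 2 = 1 / 8 := by nlinarith [hs2, hs]
    rw [← hs]
    have hb4 : 4 * b = r := by nlinarith [hb2, hr2, hb0, hrpos]
    apply le_of_forall_pos_le_add
    intro ε hε
    set δ := min 1 ε with hδdef
    have hδ0 : 0 < δ := lt_min one_pos hε
    have hδ1 : δ ≤ 1 := min_le_left _ _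
    have hδε : δ ≤ ε := min_le_right _ _
    have hh := h (1 - δ) ⟨by linarith, by linarith⟩
    have he : 1 - (1 - δ) = δ := by ring
    rw [he, div4r r δ hr2 hrpos, div4r r _ hr2 hrpos] at hh
    have hsb : Real.sqrt (δ ^ 2 + 4 * (1 - δ) ^ 2) ≤ 2 * (1 - δ) + δ ^ 2 := by
      have h1 : δ ^ 2 + 4 * (1 - δ) ^ 2 ≤ (2 * (1 - δ) + δ ^ 2) ^ 2 := by nlinarith
      calc Real.sqrt (δ ^ 2 + 4 * (1 - δ) ^ 2) ≤ Real.sqrt ((2 * (1 - δ) + δ ^ 2) ^ 2) :=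
            Real.sqrt_le_sqrt h1
        _ = 2 * (1 - δ) + δ ^ 2 := Real.sqrt_sq (by nlinarith)
    -- from hh: (1-δ)*B + δ*C ≤ 1/2 + δ*r/8 + sqrt(...)*r/8
    have hBval : B = 1/2 + r/4 := by rw [← hb4, hbdef]; ring
    rw [hBval] at hh
    have hsbr : Real.sqrt (δ ^ 2 + 4 * (1 - δ) ^ 2) * (r/8) ≤ (2 * (1 - δ) + δ ^ 2) * (r/8) :=
      mul_le_mul_of_nonneg_right hsb (by positivity)
    have hstep : δ * C ≤ δ * (1/2 + r/8 + δ * r/8) := by linarith [hh, hsbr]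
    have hCle : C ≤ 1/2 + r/8 + δ * r/8 := le_of_mul_le_mul_left hstep hδ0
    have hr4 : r ≤ 2 := by nlinarith [hr2, hrpos]
    have : δ * r / 8 ≤ ε := by nlinarith [hδε, hδ0, hrpos, hr4, hε]
    linarith
  · -- s > 0 case
    have hden : 0 < s + 2 * b := by linarith
    set α := 2 * b / (s + 2 * b) with hαdef
    clear_value α
    have hα0 : 0 ≤ α := by rw [hαdef]; positivity
    have hα1 : α ≤ 1 := by
      rw [hαdef, div_le_one hden]; linarith
    have hh := h α ⟨hα0, hα1⟩
    have h1α : 1 - α = s / (s + 2 * b) := by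
      rw [hαdef]; field_simp; ring
    rw [h1α] at hh
    have harg : (s / (s + 2 * b)) ^ 2 + 4 * α ^ 2 = (r / (s + 2 * b)) ^ 2 := by
      rw [hαdef]
      field_simp
      linear_combination hs2 - hr2
    rw [harg, Real.sqrt_sq (by positivity)] at hh
    rw [div4r r _ hr2 hrpos, div4r r _ hr2 hrpos] at hh
    -- clear denominators
    have hh2 : 2 * b * B + s * C ≤ (s + 2 * b) * (1/2) + s * r / 8 + 1/4 := by
      have hmul := mul_le_mul_of_nonneg_left hh hden.le
      have e1 : (s + 2 * b) * (α * B + s / (s + 2 * b) * C) = 2 * b * B + s * C := by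
        rw [hαdef]; field_simp
      have e2 : (s + 2 * b) * (1/2 + s / (s + 2 * b) * r / 8 + r / (s + 2 * b) * r / 8)
          = (s + 2 * b) * (1/2) + s * r / 8 + 1/4 := by
        field_simp
        linear_combination 8 * hr2
      rw [e1, e2] at hmul
      exact hmul
    -- B = 1/2 + b, so 2bB = b + 2b^2; s*C ≤ s/2 + s*r/8 + s^2/8
    have hBval : B = 1/2 + b := by rw [hbdef]; ring
    nlinarith [hh2, hs2, hs, hBval, mul_pos hs hs]
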